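/- There is no positive (10,2)-reverse multiple; that is, there is no positive integer M such that the reversal of the decimal digit expansion of M equals the decimal digit expansion of 2·M. -/

import Mathlib

/-- There is no positive `(10, 2)`-reverse multiple. -/
theorem stmt_6 :
    ¬ ∃ M : ℕ, 0 < M ∧ (Nat.digits 10 M).reverse = Nat.digits 10 (2 * M) := by
  rintro ⟨M, hM, h⟩
  have hM2 : 0 < 2 * M := by omega
  have hdne : Nat.digits 10 M ≠ [] := Nat.digits_ne_nil_iff_ne_zero.mpr hM.ne'
  -- decompose digits M = l ++ [b]
  obtain ⟨l, b, hlb⟩ : ∃ l b, Nat.digits 10 M = l ++ [b] :=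
    ⟨_, _, (List.dropLast_append_getLast hdne).symm⟩
  have hb0 : b ≠ 0 := by
    have h0 := Nat.getLast_digit_ne_zero 10 hM.ne'
    have h1 : (Nat.digits 10 M).getLast? = some b := by
      rw [hlb]; exact List.getLast?_concat
    rw [List.getLast?_eq_getLast hdne, Option.some.injEq] at h1
    rwa [h1] at h0
  -- decompose digits M = a :: t with a = M % 10
  have hdef : Nat.digits 10 M = M % 10 :: Nat.digits 10 (M / 10) :=
    Nat.digits_def' (by norm_num) hM
  set a := M % 10 with ha
  set t := Nat.digits 10 (M / 10) with ht
  have hlen : t.length = l.length := by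
    have := congrArg List.length (hdef.symm.trans hlb)
    simp at this; omega
  set m := l.length with hml
  set x := Nat.ofDigits 10 l with hx
  set y := Nat.ofDigits 10 t.reverse with hy
  have hxlt : x < 10 ^ m := by
    apply Nat.ofDigits_lt_base_pow_length (by norm_num)
    intro d hd
    exact Nat.digits_lt_base (by norm_num) (hlb ▸ List.mem_append_left _ hd)
  have hylt : y < 10 ^ m := by
    rw [← hlen, ← List.length_reverse]
    apply Nat.ofDigits_lt_base_pow_length (by norm_num)
    intro d hd
    have : d ∈ Nat.digits 10 M := by
      rw [hdef]; exact List.mem_cons_of_mem _ (List.mem_reverse.mp hd)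
    exact Nat.digits_lt_base (by norm_num) this
  -- value of M
  have hMval : M = x + 10 ^ m * b := by
    conv_lhs => rw [← Nat.ofDigits_digits 10 M, hlb]
    rw [Nat.ofDigits_append]
    simp [Nat.ofDigits, hx, hml]
  -- value of 2M : digits 10 (2M) = (a :: t).reverse = t.reverse ++ [a]
  have h2Mval : 2 * M = y + 10 ^ m * a := by
    conv_lhs => rw [← Nat.ofDigits_digits 10 (2 * M), ← h, hdef]
    rw [List.reverse_cons, Nat.ofDigits_append]
    simp [Nat.ofDigits, hlen, hy]
  -- units digit of 2M is b
  have hbval : b = (2 * M) % 10 := by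
    have hdef2 : Nat.digits 10 (2 * M) = (2 * M) % 10 :: Nat.digits 10 ((2 * M) / 10) :=
      Nat.digits_def' (by norm_num) hM2
    have : (l ++ [b]).reverse = (2 * M) % 10 :: Nat.digits 10 ((2 * M) / 10) := by
      rw [← hlb, h, hdef2]
    rw [List.reverse_append] at this
    simpa using congrArg List.head? this
  have hP : 0 < 10 ^ m := Nat.pow_pos (by norm_num)
  -- magnitude comparisons
  have h1 : 2 * b ≤ a := by
    have : 10 ^ m * (2 * b) < 10 ^ m * (a + 1) := by nlinarith
    have := Nat.lt_of_mul_lt_mul_left this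
    omega
  have h2 : a ≤ 2 * b + 1 := by
    have : 10 ^ m * a < 10 ^ m * (2 * b + 2) := by nlinarith
    have := Nat.lt_of_mul_lt_mul_left this
    omega
  have h3 : (2 * M) % 10 = (2 * (M % 10)) % 10 := by omega
  have h4 : b = (2 * a) % 10 := by rw [hbval, h3, ← ha]
  have ha9 : a < 10 := by omega
  have hcases : a = 0 ∨ a = 1 ∨ a = 2 ∨ a = 3 ∨ a = 4 ∨ a = 5 ∨ a = 6 ∨ a = 7 ∨ a = 8 ∨
      a = 9 := by omega
  rcases hcases with h5 | h5 | h5 | h5 | h5 | h5 | h5 | h5 | h5 | h5 <;> omega
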